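/- Revelation principle for matching persuasion (Theorem 1): For every stable public signaling policy σ : Ω → Δ(G × 𝓜) with finite signal set G, there exists a stable policy σ' : Ω → Δ(𝓛 × 𝓜) that is indicative and satisfies u(σ') = u(σ). Consequently, the supremum of the principal's expected utility over all stable public policies with finite signal sets is attained by a stable indicative policy of the form σ : Ω → Δ(𝓛 × 𝓜). -/

import Mathlib

open Finset

namespace MP

/-- A probability distribution on a finite type, as a nonnegative function summing to 1. -/
def IsDist {X : Type*} [Fintype X] (p : X → ℝ) : Prop :=
  (∀ x, 0 ≤ p x) ∧ ∑ x, p x = 1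

/-- Expected value of `v : Ω → ℝ` under belief `p`. -/
noncomputable def eVal {Ω : Type*} [Fintype Ω] (v : Ω → ℝ) (p : Ω → ℝ) : ℝ :=
  ∑ ω, p ω * v ω

/-- A matching `M : A ≃ B` is stable with respect to belief `p`. -/
def StableAt {Ω A B : Type*} [Fintype Ω]
    (vA : A → B → Ω → ℝ) (vB : B → A → Ω → ℝ) (M : A ≃ B) (p : Ω → ℝ) : Prop :=
  ∀ a b, eVal (vA a (M a)) p ≥ eVal (vA a b) p ∨ eVal (vB b (M.symm b)) p ≥ eVal (vB b a) p

/-- The principal's utility of matching `M` in world `ω`. -/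
noncomputable def uMatch {Ω A B : Type*} [Fintype A]
    (u : A → B → Ω → ℝ) (M : A ≃ B) (ω : Ω) : ℝ :=
  ∑ a, u a (M a) ω

/-- A signaling policy: a distribution over meta-signals `S` for each world. -/
def IsPolicy {Ω S : Type*} [Fintype S] (σ : Ω → S → ℝ) : Prop :=
  ∀ ω, IsDist (σ ω)

/-- Marginal probability of meta-signal `s`. -/
noncomputable def sigPr {Ω S : Type*} [Fintype Ω] (μ : Ω → ℝ) (σ : Ω → S → ℝ) (s : S) : ℝ :=
  ∑ ω, μ ω * σ ω s

/-- Posterior belief induced by meta-signal `s`. -/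
noncomputable def post {Ω S : Type*} [Fintype Ω] (μ : Ω → ℝ) (σ : Ω → S → ℝ) (s : S) : Ω → ℝ :=
  fun ω => μ ω * σ ω s / sigPr μ σ s

/-- Expected utility of a policy, where `util s ω` is the principal's payoff
of meta-signal `s` in world `ω`. -/
noncomputable def polU {Ω S : Type*} [Fintype Ω] [Fintype S]
    (μ : Ω → ℝ) (σ : Ω → S → ℝ) (util : S → Ω → ℝ) : ℝ :=
  ∑ ω, μ ω * ∑ s, σ ω s * util s ω

/-- Stability of a public policy with meta-signals in `G × (A ≃ B)`. -/
def StablePublic {Ω A B G : Type*} [Fintype Ω]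
    (μ : Ω → ℝ) (vA : A → B → Ω → ℝ) (vB : B → A → Ω → ℝ)
    (σ : Ω → (G × (A ≃ B)) → ℝ) : Prop :=
  ∀ s : G × (A ≃ B), 0 < sigPr μ σ s → StableAt vA vB s.2 (post μ σ s)

/-- A (raw) preference profile: for each agent on either side, a `Bool`-valued
relation on the other side; `L.1 a y y' = true` means `y ⪯_a y'`. -/
abbrev Pref (A B : Type*) := (A → B → B → Bool) × (B → A → A → Bool)

/-- `r` is a total preorder. -/
def TotalPre {X : Type*} (r : X → X → Bool) : Prop :=
  (∀ x y, r x y = true ∨ r y x = true) ∧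
  ∀ x y z, r x y = true → r y z = true → r x z = true

/-- A preference profile assigns every agent a total preorder on the other side. -/
def ValidProfile {A B : Type*} (L : Pref A B) : Prop :=
  (∀ a, TotalPre (L.1 a)) ∧ (∀ b, TotalPre (L.2 b))

/-- `p` lies in the cell `C_⪯` of the profile `L`. -/
def InCell {Ω A B : Type*} [Fintype Ω] (vA : A → B → Ω → ℝ) (vB : B → A → Ω → ℝ)
    (L : Pref A B) (p : Ω → ℝ) : Prop :=
  (∀ a y y', L.1 a y y' = true → eVal (vA a y) p ≤ eVal (vA a y') p) ∧
  (∀ b x x', L.2 b x x' = true → eVal (vB b x) p ≤ eVal (vB b x') p)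

/-- An indicative policy: every meta-signal `(⪯, M)` sent with positive probability
consists of a genuine preference profile whose induced posterior lies in `C_⪯`. -/
def Indicative {Ω A B : Type*} [Fintype Ω]
    (μ : Ω → ℝ) (vA : A → B → Ω → ℝ) (vB : B → A → Ω → ℝ)
    (σ : Ω → (Pref A B × (A ≃ B)) → ℝ) : Prop :=
  ∀ s : Pref A B × (A ≃ B), 0 < sigPr μ σ s →
    ValidProfile s.1 ∧ InCell vA vB s.1 (post μ σ s)

section Merge

variable {Ω S S' : Type*} [Fintype Ω] [Fintype S] [DecidableEq S']

/-- Push a policy forward along a map of signals, merging fibers. -/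
noncomputable def merge (σ : Ω → S → ℝ) (f : S → S') : Ω → S' → ℝ :=
  fun ω s' => ∑ s ∈ Finset.univ.filter (fun s => f s = s'), σ ω s

lemma merge_nonneg (σ : Ω → S → ℝ) (hσ : ∀ ω s, 0 ≤ σ ω s) (f : S → S') :
    ∀ ω s', 0 ≤ merge σ f ω s' :=
  fun ω _ => Finset.sum_nonneg fun s _ => hσ ω s

lemma merge_policy [Fintype S'] (σ : Ω → S → ℝ) (f : S → S') (h : IsPolicy σ) :
    IsPolicy (merge σ f) := by
  intro ω
  refine ⟨fun s' => Finset.sum_nonneg fun s _ => (h ω).1 s, ?_⟩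
  rw [← (h ω).2]
  exact Finset.sum_fiberwise_of_maps_to (fun s _ => Finset.mem_univ (f s)) _

omit [Fintype S] in
lemma sigPr_nonneg (μ : Ω → ℝ) (hμpos : ∀ ω, 0 < μ ω) (σ : Ω → S → ℝ)
    (hσ : ∀ ω s, 0 ≤ σ ω s) (s : S) : 0 ≤ sigPr μ σ s :=
  Finset.sum_nonneg fun ω _ => mul_nonneg (hμpos ω).le (hσ ω s)

omit [Fintype S] in
lemma mu_sig_zero (μ : Ω → ℝ) (hμpos : ∀ ω, 0 < μ ω) (σ : Ω → S → ℝ)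
    (hσ : ∀ ω s, 0 ≤ σ ω s) {s : S} (h : sigPr μ σ s = 0) :
    ∀ ω, μ ω * σ ω s = 0 := by
  intro ω
  exact (Finset.sum_eq_zero_iff_of_nonneg
    (fun ω _ => mul_nonneg (hμpos ω).le (hσ ω s))).1 h ω (Finset.mem_univ ω)

omit [Fintype S] in
lemma eVal_mul_sigPr (μ : Ω → ℝ) (hμpos : ∀ ω, 0 < μ ω) {σ : Ω → S → ℝ}
    (hσ : ∀ ω s, 0 ≤ σ ω s) (v : Ω → ℝ) (s : S) :
    eVal v (post μ σ s) * sigPr μ σ s = ∑ ω, μ ω * σ ω s * v ω := by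
  by_cases hc : sigPr μ σ s = 0
  · rw [hc, mul_zero]
    symm
    exact Finset.sum_eq_zero fun ω _ => by
      rw [mu_sig_zero μ hμpos σ hσ hc ω, zero_mul]
  · unfold eVal post
    rw [Finset.sum_mul]
    exact Finset.sum_congr rfl fun ω _ => by field_simp

lemma merge_sum (μ : Ω → ℝ) (σ : Ω → S → ℝ) (f : S → S') (s' : S') (w : Ω → ℝ) :
    ∑ ω, μ ω * merge σ f ω s' * w ω
      = ∑ s ∈ Finset.univ.filter (fun s => f s = s'), ∑ ω, μ ω * σ ω s * w ω := by
  unfold merge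
  rw [Finset.sum_comm]
  exact Finset.sum_congr rfl fun ω _ => by rw [Finset.mul_sum, Finset.sum_mul]

lemma merge_exists (μ : Ω → ℝ) (hμpos : ∀ ω, 0 < μ ω) (σ : Ω → S → ℝ)
    (hσ : ∀ ω s, 0 ≤ σ ω s) (f : S → S') {s' : S'}
    (hpos : 0 < sigPr μ (merge σ f) s') : ∃ s, f s = s' ∧ 0 < sigPr μ σ s := by
  by_contra h
  push_neg at h
  have h2 : sigPr μ (merge σ f) s' = ∑ ω, ∑ s ∈ Finset.univ.filter (fun s => f s = s'),
      μ ω * σ ω s := by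
    unfold sigPr merge
    exact Finset.sum_congr rfl fun ω _ => Finset.mul_sum _ _ _
  rw [h2, Finset.sum_comm] at hpos
  have h3 : ∑ s ∈ Finset.univ.filter (fun s => f s = s'), ∑ ω, μ ω * σ ω s ≤ 0 := by
    apply Finset.sum_nonpos
    intro s hs
    exact h s (Finset.mem_filter.1 hs).2
  linarith

lemma merge_le (μ : Ω → ℝ) (hμpos : ∀ ω, 0 < μ ω) {σ : Ω → S → ℝ}
    (hσ : ∀ ω s, 0 ≤ σ ω s) (f : S → S') (v v' : Ω → ℝ) {s' : S'}
    (hpos : 0 < sigPr μ (merge σ f) s')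
    (h : ∀ s, f s = s' → 0 < sigPr μ σ s → eVal v (post μ σ s) ≤ eVal v' (post μ σ s)) :
    eVal v (post μ (merge σ f) s') ≤ eVal v' (post μ (merge σ f) s') := by
  rw [← mul_le_mul_iff_of_pos_right hpos,
    eVal_mul_sigPr μ hμpos (merge_nonneg σ hσ f) v s',
    eVal_mul_sigPr μ hμpos (merge_nonneg σ hσ f) v' s',
    merge_sum, merge_sum]
  apply Finset.sum_le_sum
  intro s hs
  rw [← eVal_mul_sigPr μ hμpos hσ v s, ← eVal_mul_sigPr μ hμpos hσ v' s]
  rcases (sigPr_nonneg μ hμpos σ hσ s).lt_or_eq with hlt | heq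
  · exact mul_le_mul_of_nonneg_right (h s (Finset.mem_filter.1 hs).2 hlt) hlt.le
  · rw [← heq, mul_zero, mul_zero]

lemma merge_polU [Fintype S'] (μ : Ω → ℝ) (σ : Ω → S → ℝ) (f : S → S')
    (util' : S' → Ω → ℝ) :
    polU μ (merge σ f) util' = polU μ σ (fun s => util' (f s)) := by
  unfold polU merge
  apply Finset.sum_congr rfl
  intro ω _
  congr 1
  rw [← Finset.sum_fiberwise_of_maps_to (fun s (_ : s ∈ Finset.univ) => Finset.mem_univ (f s))
    (fun s => σ ω s * util' (f s) ω)]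
  apply Finset.sum_congr rfl
  intro s' _
  rw [Finset.sum_mul]
  apply Finset.sum_congr rfl
  intro s hs
  rw [(Finset.mem_filter.1 hs).2]

end Merge

/-- **Revelation principle for matching persuasion** (Theorem 1):
for every stable public policy with finite signal set `G`, there is a stable
indicative policy over meta-signals `𝓛 × 𝓜` achieving the same expected utility.
In particular, the supremum over stable public policies is attained by a stable
indicative policy of this form. -/
theorem revelation_principle_matching
    {Ω A B G : Type} [Fintype Ω] [Nonempty Ω] [Fintype A] [Fintype B]
    [DecidableEq A] [DecidableEq B] [Fintype G]
    (μ : Ω → ℝ) (hμ : IsDist μ) (hμpos : ∀ ω, 0 < μ ω)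
    (vA : A → B → Ω → ℝ) (vB : B → A → Ω → ℝ) (u : A → B → Ω → ℝ)
    (σ : Ω → (G × (A ≃ B)) → ℝ)
    (hpol : IsPolicy σ) (hstab : StablePublic μ vA vB σ) :
    ∃ σ' : Ω → (Pref A B × (A ≃ B)) → ℝ,
      IsPolicy σ' ∧
      (∀ s, 0 < sigPr μ σ' s → StableAt vA vB s.2 (post μ σ' s)) ∧
      Indicative μ vA vB σ' ∧
      polU μ σ' (fun s ω => uMatch u s.2 ω) = polU μ σ (fun s ω => uMatch u s.2 ω) := by
  classical
  have hσ : ∀ ω s, 0 ≤ σ ω s := fun ω s => (hpol ω).1 s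
  -- the profile induced by a belief
  set Lof : (Ω → ℝ) → Pref A B := fun p =>
    (fun a y y' => decide (eVal (vA a y) p ≤ eVal (vA a y') p),
     fun b x x' => decide (eVal (vB b x) p ≤ eVal (vB b x') p)) with hLof
  set f : (G × (A ≃ B)) → (Pref A B × (A ≃ B)) := fun s => (Lof (post μ σ s), s.2) with hf
  refine ⟨merge σ f, merge_policy σ f hpol, ?_, ?_, ?_⟩
  · -- stability
    intro s' hpos a b
    by_cases hall : ∀ s, f s = s' → 0 < sigPr μ σ s →
        eVal (vA a b) (post μ σ s) ≤ eVal (vA a (s'.2 a)) (post μ σ s)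
    · exact Or.inl (merge_le μ hμpos hσ f _ _ hpos hall)
    · push_neg at hall
      obtain ⟨s1, hfs1, hs1pos, hlt⟩ := hall
      have hM1 : s1.2 = s'.2 := congrArg Prod.snd hfs1
      have hL1 : Lof (post μ σ s1) = s'.1 := congrArg Prod.fst hfs1
      have hstab1 := hstab s1 hs1pos a b
      rw [hM1] at hstab1
      have hB1 : eVal (vB b a) (post μ σ s1) ≤ eVal (vB b (s'.2.symm b)) (post μ σ s1) := by
        rcases hstab1 with h1 | h1
        · exact absurd h1 (not_le.2 hlt)
        · exact h1
      -- the profile records this inequality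
      have hLval : s'.1.2 b a (s'.2.symm b) = true := by
        rw [← hL1]
        exact decide_eq_true hB1
      refine Or.inr (merge_le μ hμpos hσ f _ _ hpos ?_)
      intro s hfs hspos
      have hL : Lof (post μ σ s) = s'.1 := congrArg Prod.fst hfs
      have : (Lof (post μ σ s)).2 b a (s'.2.symm b) = true := by rw [hL]; exact hLval
      exact of_decide_eq_true this
  · -- indicative
    intro s' hpos
    obtain ⟨s0, hfs0, hs0pos⟩ := merge_exists μ hμpos σ hσ f hpos
    have hL0 : Lof (post μ σ s0) = s'.1 := congrArg Prod.fst hfs0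
    constructor
    · -- valid profile
      rw [← hL0]
      constructor
      · intro a
        constructor
        · intro y y'
          rcases le_total (eVal (vA a y) (post μ σ s0)) (eVal (vA a y') (post μ σ s0)) with h | h
          · exact Or.inl (decide_eq_true h)
          · exact Or.inr (decide_eq_true h)
        · intro x y z hxy hyz
          exact decide_eq_true (le_trans (of_decide_eq_true hxy) (of_decide_eq_true hyz))
      · intro b
        constructor
        · intro y y'
          rcases le_total (eVal (vB b y) (post μ σ s0)) (eVal (vB b y') (post μ σ s0)) with h | h
          · exact Or.inl (decide_eq_true h)
          · exact Or.inr (decide_eq_true h)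
        · intro x y z hxy hyz
          exact decide_eq_true (le_trans (of_decide_eq_true hxy) (of_decide_eq_true hyz))
    · -- in cell
      constructor
      · intro a y y' hy
        refine merge_le μ hμpos hσ f _ _ hpos ?_
        intro s hfs hspos
        have hL : Lof (post μ σ s) = s'.1 := congrArg Prod.fst hfs
        have : (Lof (post μ σ s)).1 a y y' = true := by rw [hL]; exact hy
        exact of_decide_eq_true this
      · intro b x x' hx
        refine merge_le μ hμpos hσ f _ _ hpos ?_
        intro s hfs hspos
        have hL : Lof (post μ σ s) = s'.1 := congrArg Prod.fst hfs
        have : (Lof (post μ σ s)).2 b x x' = true := by rw [hL]; exact hx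
        exact of_decide_eq_true this
  · -- same expected utility
    rw [merge_polU]

end MP
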